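/- Let k ≥ 2 be an integer, A a finite alphabet, and x : ℕ → A a k-automatic sequence. Then there exists a bound B (depending only on x) such that for every nonempty finite word y, if y^B occurs as a factor of x, then y^n occurs as a factor of x for every n ≥ 1 (i.e., y occurs with unbounded exponent in x). -/

import Mathlib

/-- The factor of the infinite word `x` of length `n` starting at position `i`. -/
def factorAt {A : Type*} (x : ℕ → A) (i n : ℕ) : List A :=
  (List.range n).map fun j => x (i + j)

/-- `w` is a factor of the infinite word `x`. -/
def IsFactor {A : Type*} (x : ℕ → A) (w : List A) : Prop :=
  ∃ i : ℕ, w = factorAt x i w.length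

/-- The `n`-th power of the finite word `w`. -/
def wpow {A : Type*} (w : List A) (n : ℕ) : List A :=
  (List.replicate n w).flatten

/-- A nonempty finite word is primitive if it is not a proper power. -/
def Primitive {A : Type*} (w : List A) : Prop :=
  w ≠ [] ∧ ∀ (t : List A) (e : ℕ), 2 ≤ e → w ≠ wpow t e

/-- `w` occurs with unbounded exponent in the infinite word `x`. -/
def UnboundedExponent {A : Type*} (x : ℕ → A) (w : List A) : Prop :=
  ∀ n : ℕ, 1 ≤ n → IsFactor x (wpow w n)

/-- `w` belongs to `{a,b}^*`, the submonoid generated by `a` and `b`. -/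
def InStarPair {A : Type*} (a b w : List A) : Prop :=
  ∃ l : List (List A), (∀ t ∈ l, t = a ∨ t = b) ∧ w = l.flatten

/-- `(u, v)` is a minimal pair: there is no pair `(a, b)` of smaller total length
with `u, v ∈ {a,b}^*`. -/
def MinimalPair {A : Type*} (u v : List A) : Prop :=
  ¬ ∃ a b : List A, a.length + b.length < u.length + v.length ∧
      InStarPair a b u ∧ InStarPair a b v

/-- The finite word `w` is a prefix of the infinite word `x`. -/
def WordPrefix {A : Type*} (x : ℕ → A) (w : List A) : Prop :=
  w = factorAt x 0 w.length

/-- The infinite word `x` belongs to `{u,v}^ω`, i.e. `x` is an infinite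
concatenation of blocks, each equal to `u` or to `v`. -/
def InOmegaPair {A : Type*} (x : ℕ → A) (u v : List A) : Prop :=
  ∃ f : ℕ → List A, (∀ n, f n = u ∨ f n = v) ∧
    ∀ n : ℕ, WordPrefix x (((List.range n).map f).flatten)

/-- The morphism `{x,y}^* → Σ^*` sending `x` (encoded `false`) to `u` and
`y` (encoded `true`) to `v`. -/
def sigmaMap {A : Type*} (u v : List A) (w : List Bool) : List A :=
  (w.map fun c => if c then v else u).flatten

/-- The number of occurrences of the factor `xy` (encoded `[false, true]`) in `w`. -/
def countXY (w : List Bool) : ℕ :=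
  ((List.range w.length).filter fun i => decide ([false, true] <+: w.drop i)).length

/-- `x : ℕ → A` is a `k`-automatic sequence: there is a DFAO (finite state set `Q`,
transition function `δ` on base-`k` digits, initial state `q₀`, output map `τ`) such that
`x n` is the output of the state reached from `q₀` by reading the base-`k` digits of `n`,
most significant digit first. -/
def IsKAutomatic {A : Type*} (k : ℕ) (hk : 2 ≤ k) (x : ℕ → A) : Prop :=
  ∃ (Q : Type) (_ : Fintype Q) (δ : Q → Fin k → Q) (q₀ : Q) (τ : Q → A),
    ∀ n : ℕ,
      x n = τ (((Nat.digits k n).reverse).foldl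
        (fun q d => δ q ⟨d % k, Nat.mod_lt d (by omega)⟩) q₀)


section AuxForAutomaticPowerDichotomy

variable {Q : Type*} {k : ℕ}

def gstate (hk0 : 0 < k) (δ : Q → Fin k → Q) (q : Q) : ℕ → ℕ → Q
  | 0, _ => q
  | (ℓ+1), t => δ (gstate hk0 δ q ℓ (t / k)) ⟨t % k, Nat.mod_lt _ hk0⟩

lemma gstate_add (hk0 : 0 < k) (δ : Q → Fin k → Q) (q : Q) (a : ℕ) :
    ∀ (b t₁ t₂ : ℕ), t₂ < k ^ b →
      gstate hk0 δ q (a + b) (t₁ * k ^ b + t₂) = gstate hk0 δ (gstate hk0 δ q a t₁) b t₂ := by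
  intro b
  induction b with
  | zero =>
      intro t₁ t₂ ht
      have : t₂ = 0 := by simpa using Nat.lt_one_iff.mp (by simpa using ht)
      subst this; simp [gstate]
  | succ b ih =>
      intro t₁ t₂ ht
      have hdiv : (t₁ * k ^ (b+1) + t₂) / k = t₁ * k ^ b + t₂ / k := by
        rw [pow_succ, ← mul_assoc, mul_comm (t₁ * k ^ b) k, Nat.mul_add_div hk0]
      have hmod : (t₁ * k ^ (b+1) + t₂) % k = t₂ % k := by
        rw [pow_succ, ← mul_assoc, mul_comm (t₁ * k ^ b) k, Nat.mul_add_mod]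
      show gstate hk0 δ q ((a+b)+1) _ = _
      rw [gstate, hdiv, ih t₁ (t₂ / k) (Nat.div_lt_of_lt_mul (by rwa [← pow_succ']))]
      exact congrArg (δ _) (Fin.ext hmod)

def runSt (hk : 2 ≤ k) (δ : Q → Fin k → Q) (q₀ : Q) (n : ℕ) : Q :=
  ((Nat.digits k n).reverse).foldl (fun q d => δ q ⟨d % k, Nat.mod_lt d (by omega)⟩) q₀

lemma runSt_rec (hk : 2 ≤ k) (δ : Q → Fin k → Q) (q₀ : Q) (n d : ℕ)
    (hpos : 0 < k * n + d) (hd : d < k) :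
    runSt hk δ q₀ (k * n + d) = δ (runSt hk δ q₀ n) ⟨d, hd⟩ := by
  unfold runSt
  rw [Nat.digits_def' (by omega : 1 < k) hpos]
  have h1 : (k * n + d) % k = d := by
    rw [Nat.mul_add_mod, Nat.mod_eq_of_lt hd]
  have h2 : (k * n + d) / k = n := by
    rw [Nat.mul_add_div (by omega), Nat.div_eq_of_lt hd, add_zero]
  rw [h1, h2, List.reverse_cons, List.foldl_append]
  simp [Nat.mod_eq_of_lt hd]

lemma runSt_block (hk : 2 ≤ k) (δ : Q → Fin k → Q) (q₀ : Q) :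
    ∀ (ℓ n t : ℕ), 1 ≤ n → t < k ^ ℓ →
      runSt hk δ q₀ (n * k ^ ℓ + t) =
        gstate (by omega : 0 < k) δ (runSt hk δ q₀ n) ℓ t := by
  intro ℓ
  induction ℓ with
  | zero =>
      intro n t hn ht
      have : t = 0 := Nat.lt_one_iff.mp (by simpa using ht)
      subst this; simp [gstate]
  | succ ℓ ih =>
      intro n t hn ht
      have key : n * k ^ (ℓ+1) + t = k * (n * k ^ ℓ + t / k) + t % k := by
        rw [pow_succ]
        have := Nat.div_add_mod t k
        ring_nf
        omega
      rw [key, runSt_rec hk δ q₀ _ _ (by positivity) (Nat.mod_lt _ (by omega)),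
        ih n (t / k) hn (Nat.div_lt_of_lt_mul (by rwa [← pow_succ']))]
      rfl

lemma gstate_zero (hk0 : 0 < k) (δ : Q → Fin k → Q) (q : Q) (i : ℕ) :
    gstate hk0 δ q i 0 = (fun v => δ v ⟨0, hk0⟩)^[i] q := by
  induction i with
  | zero => simp [gstate]
  | succ i ih =>
      rw [Function.iterate_succ_apply']
      show δ (gstate hk0 δ q i (0 / k)) ⟨0 % k, Nat.mod_lt _ hk0⟩ = _
      rw [Nat.zero_div, ih]
      exact congrArg (δ _) (Fin.ext (Nat.zero_mod k))

/-- Pigeonhole: a function into a fintype repeats among `0,...,card`. -/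
lemma exists_repeat {β : Type*} [Fintype β] (f : ℕ → β) :
    ∃ a b, a < b ∧ b ≤ Fintype.card β ∧ f a = f b := by
  have h := Finset.exists_ne_map_eq_of_card_lt_of_maps_to
    (s := Finset.range (Fintype.card β + 1)) (t := (Finset.univ : Finset β))
    (by simp) (fun a _ => Finset.mem_univ (f a))
  obtain ⟨a, ha, b, hb, hab, hfab⟩ := h
  rcases Nat.lt_or_ge a b with h' | h'
  · exact ⟨a, b, h', by simpa using Nat.lt_succ_iff.mp (Finset.mem_range.mp hb), hfab⟩
  · exact ⟨b, a, by omega, by simpa using Nat.lt_succ_iff.mp (Finset.mem_range.mp ha), hfab.symm⟩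

lemma iterate_stable {β : Type*} (f : β → β) (x : β) (a c : ℕ) (hc : 0 < c)
    (h : f^[a + c] x = f^[a] x) :
    ∀ i, a ≤ i → f^[i + c] x = f^[i] x := by
  intro i hi
  have : i + c = (i - a) + (a + c) := by omega
  rw [this, Function.iterate_add_apply, h, ← Function.iterate_add_apply]
  congr 1; omega

lemma iterate_stable_mul {β : Type*} (f : β → β) (x : β) (a c : ℕ) (hc : 0 < c)
    (h : f^[a + c] x = f^[a] x) :
    ∀ i, a ≤ i → ∀ t, f^[i + t * c] x = f^[i] x := by
  intro i hi t
  induction t with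
  | zero => simp
  | succ t ih =>
      have : i + (t + 1) * c = (i + t * c) + c := by ring
      rw [this, iterate_stable f x a c hc h _ (by omega), ih]

lemma pow_mod_stable (k D : ℕ) (β c' : ℕ)
    (h : k ^ (β + c') % D = k ^ β % D) :
    ∀ i, β ≤ i → ∀ t, k ^ (i + t * c') % D = k ^ i % D := by
  have step : ∀ i, β ≤ i → k ^ (i + c') % D = k ^ i % D := by
    intro i hi
    have h1 : k ^ (i + c') = k ^ (i - β) * k ^ (β + c') := by
      rw [← pow_add]; congr 1; omega
    have h2 : k ^ i = k ^ (i - β) * k ^ β := by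
      rw [← pow_add]; congr 1; omega
    rw [h1, Nat.mul_mod, h, ← Nat.mul_mod, ← h2]
  intro i hi t
  induction t with
  | zero => simp
  | succ t ih =>
      have e : i + (t + 1) * c' = (i + t * c') + c' := by ring
      rw [e, step _ (by omega), ih]


section
variable {Q C : Type*} {k : ℕ}

lemma stage2 [Fintype Q] (hk0 : 0 < k) (hk : 2 ≤ k)
    (δ : Q → Fin k → Q) (out : Q → C) (D : ℕ) (hD : 0 < D)
    (hDN : D ≤ Fintype.card Q)
    (E : ℕ → C) (hE : ∀ a b, a % D = b % D → E a = E b)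
    (q : Q) (m : ℕ)
    (hm : 2 * Fintype.card Q +
      (Fintype.card Q) * (Fintype.card Q) * 2 ^ ((Fintype.card Q) * (Fintype.card Q)) ≤ m)
    (hGood : ∀ t < k ^ m, out (gstate hk0 δ q m t) = E t) :
    ∀ L : ℕ, ∃ w ℓ, L ≤ ℓ ∧ ∀ t < k ^ ℓ, out (gstate hk0 δ q (w + ℓ) t) = E t := by
  classical
  set N := Fintype.card Q with hNdef
  have hN : 0 < N := Fintype.card_pos_iff.mpr ⟨q⟩
  -- the zero map and its eventual periodicity
  set zq : Q → Q := fun v => δ v ⟨0, hk0⟩ with hzqdef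
  obtain ⟨α, bα, hαβ, hbN, hz⟩ := exists_repeat (fun j => zq^[j] q)
  set c : ℕ := bα - α with hcdef
  have hc : 0 < c := by omega
  have hzc : zq^[α + c] q = zq^[α] q := by
    have : α + c = bα := by omega
    rw [this]; exact hz.symm
  -- powers of k mod D, eventual periodicity
  obtain ⟨β, bβ, hββ, hbD, hp⟩ := exists_repeat (fun j => (⟨k ^ j % D, Nat.mod_lt _ hD⟩ : Fin D))
  have hbD' : bβ ≤ D := by simpa using hbD
  set c' : ℕ := bβ - β with hc'def
  have hc' : 0 < c' := by omega
  have hpc : k ^ (β + c') % D = k ^ β % D := by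
    have : β + c' = bβ := by omega
    rw [this]
    have := congrArg Fin.val hp
    simpa using this.symm
  set ℓ₀ : ℕ := β with hl0def
  set c₀ : ℕ := c * c' with hc₀def
  have hc₀ : 0 < c₀ := Nat.mul_pos hc hc'
  set κ : ℕ := k ^ ℓ₀ % D with hκdef
  have hκlt : κ < D := Nat.mod_lt _ hD
  have hκ : ∀ j, k ^ (ℓ₀ + j * c₀) % D = κ := by
    intro j
    have : ℓ₀ + j * c₀ = β + (j * c) * c' := by rw [hc₀def]; ring
    rw [this, pow_mod_stable k D β c' hpc β le_rfl (j * c)]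
  -- Good predicate
  set Good : Q → ℕ → ℕ → Prop :=
    fun v ℓ φ => ∀ t < k ^ ℓ, out (gstate hk0 δ v ℓ t) = E (φ + t) with hGdef
  have hEshift : ∀ a b (t : ℕ), a % D = b % D → E (a + t) = E (b + t) := by
    intro a b t h
    exact hE _ _ (Nat.ModEq.add_right t h)
  -- the child equivalence
  have childEq : ∀ v ℓ φ, k ^ ℓ % D = κ →
      (Good v (c₀ + ℓ) φ ↔
        ∀ u < k ^ c₀, Good (gstate hk0 δ v c₀ u) ℓ ((φ + u * κ) % D)) := by
    intro v ℓ φ hℓ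
    have hmodkey : ∀ u t : ℕ, (φ + (u * k ^ ℓ + t)) % D = ((φ + u * κ) % D + t) % D := by
      intro u t
      have h1 : k ^ ℓ ≡ κ [MOD D] := by
        show k ^ ℓ % D = κ % D
        rw [hℓ, Nat.mod_eq_of_lt hκlt]
      calc (φ + (u * k ^ ℓ + t)) % D
          = (φ + u * k ^ ℓ + t) % D := by ring_nf
        _ = (φ + u * κ + t) % D :=
            ((Nat.ModEq.add_left φ (Nat.ModEq.mul_left u h1)).add_right t)
        _ = ((φ + u * κ) % D + t) % D :=
            ((Nat.mod_modEq (φ + u * κ) D).add_right t).symm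
    constructor
    · intro hg u hu t ht
      rw [← gstate_add hk0 δ v c₀ ℓ u t ht]
      have harg : u * k ^ ℓ + t < k ^ (c₀ + ℓ) := by
        calc u * k ^ ℓ + t < u * k ^ ℓ + k ^ ℓ := by omega
          _ = (u + 1) * k ^ ℓ := by ring
          _ ≤ k ^ c₀ * k ^ ℓ := Nat.mul_le_mul_right _ (by omega)
          _ = k ^ (c₀ + ℓ) := (pow_add k c₀ ℓ).symm
      rw [hg _ harg]
      exact hE _ _ (hmodkey u t)
    · intro hch t ht
      have hu : t / k ^ ℓ < k ^ c₀ :=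
        Nat.div_lt_of_lt_mul (by rw [← pow_add, add_comm ℓ c₀]; exact ht)
      have ht2 : t % k ^ ℓ < k ^ ℓ := Nat.mod_lt _ (pow_pos hk0 _)
      have hdm : t / k ^ ℓ * k ^ ℓ + t % k ^ ℓ = t := by
        rw [mul_comm]; exact Nat.div_add_mod t (k ^ ℓ)
      have := hch (t / k ^ ℓ) hu (t % k ^ ℓ) ht2
      rw [← gstate_add hk0 δ v c₀ ℓ _ _ ht2, hdm] at this
      rw [this]
      refine hE _ _ ?_
      have e : φ + t = φ + (t / k ^ ℓ * k ^ ℓ + t % k ^ ℓ) := by rw [hdm]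
      rw [e]
      exact (hmodkey _ _).symm
  -- the subset dynamical system
  set F : Finset (Q × Fin D) → Finset (Q × Fin D) := fun Sp =>
    Finset.univ.filter (fun vφ => ∀ u < k ^ c₀,
      (gstate hk0 δ vφ.1 c₀ u, (⟨(vφ.2.val + u * κ) % D, Nat.mod_lt _ hD⟩ : Fin D)) ∈ Sp)
    with hFdef
  set S : ℕ → Finset (Q × Fin D) := fun j =>
    Finset.univ.filter (fun vφ => Good vφ.1 (ℓ₀ + j * c₀) vφ.2.val) with hSdef
  have hSF : ∀ j, S (j + 1) = F (S j) := by
    intro j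
    ext ⟨v, φ⟩
    simp only [hSdef, hFdef, Finset.mem_filter, Finset.mem_univ, true_and]
    have harith : ℓ₀ + (j + 1) * c₀ = c₀ + (ℓ₀ + j * c₀) := by ring
    rw [harith]
    rw [childEq v (ℓ₀ + j * c₀) φ.val (hκ j)]
  have hSiter : ∀ j, S j = F^[j] (S 0) := by
    intro j
    induction j with
    | zero => simp
    | succ j ih => rw [hSF j, ih, Function.iterate_succ_apply']
  obtain ⟨a, b, hab, hbcard, hFab⟩ := exists_repeat (fun j => F^[j] (S 0))
  have hcardF : Fintype.card (Finset (Q × Fin D)) = 2 ^ (N * D) := by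
    rw [Fintype.card_finset, Fintype.card_prod, Fintype.card_fin]
  have hbG : b ≤ 2 ^ (N * N) := by
    rw [hcardF] at hbcard
    calc b ≤ 2 ^ (N * D) := hbcard
      _ ≤ 2 ^ (N * N) := Nat.pow_le_pow_right (by omega) (Nat.mul_le_mul_left _ hDN)
  have hFcyc : ∀ j, a ≤ j → ∀ t, F^[j + t * (b - a)] (S 0) = F^[j] (S 0) := by
    apply iterate_stable_mul F (S 0) a (b - a) (by omega)
    have : a + (b - a) = b := by omega
    rw [this]; exact hFab.symm
  -- the spine
  have hspine : ∀ i, i ≤ m → ∀ t < k ^ (m - i),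
      out (gstate hk0 δ (zq^[i] q) (m - i) t) = E t := by
    intro i him t ht
    rw [← gstate_zero hk0 δ q i]
    have := gstate_add hk0 δ q i (m - i) 0 t ht
    rw [zero_mul, zero_add] at this
    rw [← this]
    have harith : i + (m - i) = m := by omega
    rw [harith]
    exact hGood t (lt_of_lt_of_le ht (Nat.pow_le_pow_right (by omega) (by omega)))
  -- bounds
  have hαN : α + 1 ≤ N := by omega
  have hcN : c ≤ N := by omega
  have hl0N : ℓ₀ + 1 ≤ D := by omega
  have hc'D : c' ≤ D := by omega
  have hc₀N : c₀ ≤ N * N := by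
    calc c₀ = c * c' := rfl
      _ ≤ N * D := Nat.mul_le_mul hcN hc'D
      _ ≤ N * N := Nat.mul_le_mul_left _ hDN
  -- membership of the constant spine state
  set rstar : Q := zq^[m - ℓ₀] q with hrdef
  have hmem : ∀ j, ℓ₀ + j * c₀ + α ≤ m → (rstar, (⟨0, hD⟩ : Fin D)) ∈ S j := by
    intro j hjm
    have hij : m - (ℓ₀ + j * c₀) ≥ α := by omega
    have hrj : zq^[m - (ℓ₀ + j * c₀)] q = rstar := by
      rw [hrdef]
      have e : m - ℓ₀ = (m - (ℓ₀ + j * c₀)) + j * c' * c := by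
        have h1 : j * c' * c = j * c₀ := by rw [hc₀def]; ring
        omega
      rw [e, iterate_stable_mul zq q α c hc hzc _ hij (j * c')]
    simp only [hSdef, Finset.mem_filter, Finset.mem_univ, true_and]
    intro t ht
    have := hspine (m - (ℓ₀ + j * c₀)) (by omega) t
      (by rwa [Nat.sub_sub_self (by omega : ℓ₀ + j * c₀ ≤ m)])
    rw [hrj, Nat.sub_sub_self (by omega : ℓ₀ + j * c₀ ≤ m)] at this
    rw [this, zero_add]
  have hmemall : ∀ j, a ≤ j → (rstar, (⟨0, hD⟩ : Fin D)) ∈ S j := by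
    intro j hj
    have hc1 : 0 < b - a := by omega
    have hj' : a + (j - a) % (b - a) < b := by
      have := Nat.mod_lt (j - a) hc1
      omega
    have hSj : S j = S (a + (j - a) % (b - a)) := by
      rw [hSiter j, hSiter (a + (j - a) % (b - a))]
      have e : j = (a + (j - a) % (b - a)) + ((j - a) / (b - a)) * (b - a) := by
        have hdm := Nat.div_add_mod (j - a) (b - a)
        have hcm : (j - a) / (b - a) * (b - a) = (b - a) * ((j - a) / (b - a)) :=
          Nat.mul_comm _ _
        omega
      conv_lhs => rw [e]
      exact hFcyc (a + (j - a) % (b - a)) (by omega) ((j - a) / (b - a))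
    rw [hSj]
    apply hmem
    -- ℓ₀ + (a + (j-a)%(b-a)) * c₀ + α ≤ m
    have hjb : a + (j - a) % (b - a) ≤ 2 ^ (N * N) := by
      have hmlt := Nat.mod_lt (j - a) hc1
      omega
    calc ℓ₀ + (a + (j - a) % (b - a)) * c₀ + α
        ≤ ℓ₀ + 2 ^ (N * N) * (N * N) + α :=
          by
            have := Nat.mul_le_mul hjb hc₀N
            omega
      _ ≤ 2 * N + N * N * 2 ^ (N * N) := by
          have h1 : ℓ₀ + 1 ≤ N := by omega
          have h2 : α + 1 ≤ N := hαN
          have : 2 ^ (N * N) * (N * N) = N * N * 2 ^ (N * N) := by ring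
          omega
      _ ≤ m := hm
  -- conclusion
  intro L
  set j : ℕ := a + L with hjdef
  refine ⟨m - ℓ₀, ℓ₀ + j * c₀, ?_, ?_⟩
  · calc L ≤ j := by omega
      _ ≤ j * c₀ := Nat.le_mul_of_pos_right _ hc₀
      _ ≤ ℓ₀ + j * c₀ := by omega
  · intro t ht
    have hmem' := hmemall j (by omega)
    simp only [hSdef, Finset.mem_filter, Finset.mem_univ, true_and] at hmem'
    have hg := hmem' t ht
    rw [zero_add] at hg
    have e := gstate_add hk0 δ q (m - ℓ₀) (ℓ₀ + j * c₀) 0 t ht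
    rw [zero_mul, zero_add] at e
    rw [e, gstate_zero hk0 δ q (m - ℓ₀)]
    exact hg
end


section helpers
variable {A : Type*}

lemma per_mul (Y : ℕ → A) (q : ℕ) (hper : ∀ t, Y (t + q) = Y t) :
    ∀ (e t : ℕ), Y (t + e * q) = Y t := by
  intro e
  induction e with
  | zero => simp
  | succ e ih =>
      intro t
      have : t + (e + 1) * q = (t + e * q) + q := by ring
      rw [this, hper, ih]

lemma per_of_dvd (Y : ℕ → A) (q S : ℕ) (hper : ∀ t, Y (t + q) = Y t) (hdvd : q ∣ S) :
    ∀ t, Y (t + S) = Y t := by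
  intro t
  obtain ⟨e, rfl⟩ := hdvd
  rw [mul_comm]
  exact per_mul Y q hper e t

lemma period_of_window (Y : ℕ → A) (p₀ : ℕ) (h0 : 0 < p₀)
    (hper : ∀ t, Y (t + p₀) = Y t) (A₀ T S : ℕ) (hT : p₀ ≤ T)
    (hwin : ∀ t < T, Y (A₀ + t) = Y (A₀ + S + t)) :
    ∀ t, Y (t + S) = Y t := by
  have hmod : ∀ u, Y u = Y (u % p₀) := by
    intro u
    have e : u % p₀ + u / p₀ * p₀ = u := by
      have h := Nat.div_add_mod u p₀
      have h2 : u / p₀ * p₀ = p₀ * (u / p₀) := Nat.mul_comm _ _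
      omega
    calc Y u = Y (u % p₀ + u / p₀ * p₀) := by rw [e]
      _ = Y (u % p₀) := per_mul Y p₀ hper _ _
  have hcong : ∀ u v, u % p₀ = v % p₀ → Y u = Y v := by
    intro u v h
    rw [hmod u, hmod v, h]
  have hwin' : ∀ t, Y (A₀ + t) = Y (A₀ + S + t) := by
    intro t
    have h1 : Y (A₀ + t) = Y (A₀ + t % p₀) := by
      apply hcong
      conv_lhs => rw [Nat.add_mod]
      conv_rhs => rw [Nat.add_mod]
      rw [Nat.mod_mod_of_dvd t dvd_rfl]
    have h2 : Y (A₀ + S + t) = Y (A₀ + S + t % p₀) := by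
      apply hcong
      conv_lhs => rw [Nat.add_mod]
      conv_rhs => rw [Nat.add_mod]
      rw [Nat.mod_mod_of_dvd t dvd_rfl]
    rw [h1, h2]
    exact hwin (t % p₀) (lt_of_lt_of_le (Nat.mod_lt _ h0) hT)
  have hAle : A₀ ≤ p₀ * A₀ := Nat.le_mul_of_pos_left A₀ h0
  have hmulper : ∀ t, Y (t + p₀ * A₀) = Y t :=
    per_of_dvd Y p₀ (p₀ * A₀) hper ⟨A₀, rfl⟩
  intro t
  set w : ℕ := t + p₀ * A₀ - A₀ with hwdef
  calc Y (t + S) = Y (t + S + p₀ * A₀) := (hmulper (t + S)).symm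
    _ = Y (A₀ + S + w) := by congr 1; omega
    _ = Y (A₀ + w) := (hwin' w).symm
    _ = Y (t + p₀ * A₀) := by congr 1; omega
    _ = Y t := hmulper t

lemma div_bounds (i K : ℕ) (hK : 0 < K) :
    i ≤ (i / K + 1) * K ∧ (i / K + 1) * K ≤ i + K := by
  have h1 : i / K * K ≤ i := Nat.div_mul_le_self i K
  have h2 : i < i / K * K + K := by
    have h3 := Nat.div_add_mod i K
    have h4 := Nat.mod_lt i hK
    calc i = K * (i / K) + i % K := h3.symm
      _ < K * (i / K) + K := by omega
      _ = i / K * K + K := by rw [Nat.mul_comm (i / K) K]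
  have he : (i / K + 1) * K = i / K * K + K := by ring
  omega

end helpers

section listlemmas
variable {A : Type*}

lemma wpow_eq_map (y : List A) (hp : 0 < y.length) (n : ℕ) :
    wpow y n = (List.range (n * y.length)).map
      (fun t => y[t % y.length]'(Nat.mod_lt _ hp)) := by
  set p := y.length with hpdef
  induction n with
  | zero => simp [wpow]
  | succ n ih =>
      have h1 : wpow y (n + 1) = y ++ wpow y n := by
        rw [wpow, List.replicate_succ, List.flatten_cons]; rfl
      have h2 : (n + 1) * p = p + n * p := by ring
      rw [h1, h2, List.range_add, List.map_append, ih]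
      congr 1
      · apply List.ext_getElem (by simp [hpdef])
        intro i h₁ h₂
        simp only [List.getElem_map, List.getElem_range]
        congr 1
        exact (Nat.mod_eq_of_lt (by simpa using h₁)).symm
      · rw [List.map_map]
        apply List.map_congr_left
        intro t _
        simp only [Function.comp]
        congr 1
        exact (Nat.add_mod_left p t).symm
  
lemma wpow_length (y : List A) (n : ℕ) : (wpow y n).length = n * y.length := by
  rw [wpow]
  induction n with
  | zero => simp
  | succ n ih =>
      rw [List.replicate_succ, List.flatten_cons, List.length_append, ih]
      ring

lemma factorAt_length (x : ℕ → A) (i n : ℕ) : (factorAt x i n).length = n := by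
  simp [factorAt]

lemma factorAt_getElem (x : ℕ → A) (i n j : ℕ) (h : j < (factorAt x i n).length) :
    (factorAt x i n)[j] = x (i + j) := by
  simp [factorAt]

end listlemmas

end AuxForAutomaticPowerDichotomy

/-- For a `k`-automatic sequence `x` there is a bound `B` such that any nonempty word `y`
with `y^B` a factor of `x` occurs with unbounded exponent in `x`. -/
theorem automatic_power_dichotomy {A : Type*} [Fintype A] (k : ℕ) (hk : 2 ≤ k)
    (x : ℕ → A) (hx : IsKAutomatic k hk x) :
    ∃ B : ℕ, ∀ y : List A, y ≠ [] → IsFactor x (wpow y B) → UnboundedExponent x y := by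
  classical
  obtain ⟨Q, fQ, δ, q₀, τ, hxa⟩ := hx
  haveI : Fintype Q := fQ
  have hk0 : 0 < k := by omega
  set N := Fintype.card Q with hNdef
  set M₀ : ℕ := 2 * N + N * N * 2 ^ (N * N) with hM₀def
  refine ⟨2 * k ^ (M₀ + 1), ?_⟩
  intro y hy hyB
  set s : ℕ → Q := runSt hk δ q₀ with hsdef
  have hxs : ∀ n, x n = τ (s n) := hxa
  set B : ℕ := 2 * k ^ (M₀ + 1) with hBdef
  set p := y.length with hpdef
  have hp : 0 < p := List.length_pos_iff.mpr hy
  set Y : ℕ → A := fun t => y[t % p]'(Nat.mod_lt _ hp) with hYdef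
  have hYper : ∀ t, Y (t + p) = Y t := by
    intro t; simp only [hYdef]; congr 1; exact Nat.add_mod_right t p
  -- the occurrence window of y^B
  obtain ⟨i₀, hocc⟩ := hyB
  have hY : ∀ w, w < B * p → x (i₀ + w) = Y w := by
    intro w hw
    have hocc' : (List.range (B * p)).map Y = factorAt x i₀ (B * p) := by
      have h1 := hocc
      rw [wpow_length, wpow_eq_map y hp B] at h1
      exact h1
    have hw1 : w < ((List.range (B * p)).map Y).length := by simpa using hw
    have h4 := List.getElem_of_eq hocc' hw1
    rw [List.getElem_map, List.getElem_range, factorAt_getElem] at h4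
    exact h4.symm
  -- minimal period of Y
  have hex : ∃ q, 0 < q ∧ ∀ t, Y (t + q) = Y t := ⟨p, hp, hYper⟩
  set p₀ := Nat.find hex with hp₀def
  have hfind := Nat.find_spec hex
  have h00 : 0 < p₀ := hfind.1
  have hper₀ : ∀ t, Y (t + p₀) = Y t := hfind.2
  have hdvd : ∀ q, 0 < q → (∀ t, Y (t + q) = Y t) → p₀ ∣ q := by
    intro q hq hqper
    have hr : ∀ t, Y (t + q % p₀) = Y t := by
      intro t
      have e : (t + q % p₀) + (q / p₀) * p₀ = t + q := by
        have h1 := Nat.div_add_mod q p₀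
        have h2 : q / p₀ * p₀ = p₀ * (q / p₀) := Nat.mul_comm _ _
        omega
      calc Y (t + q % p₀) = Y ((t + q % p₀) + (q / p₀) * p₀) :=
            (per_mul Y p₀ hper₀ _ _).symm
        _ = Y (t + q) := by rw [e]
        _ = Y t := hqper t
    by_contra hnd
    have hpos : 0 < q % p₀ := by
      rcases Nat.eq_zero_or_pos (q % p₀) with h | h
      · exact absurd (Nat.dvd_of_mod_eq_zero h) hnd
      · exact h
    exact Nat.find_min hex (Nat.mod_lt q h00) ⟨hpos, hr⟩
  have hp₀p : p₀ ∣ p := hdvd p hp hYper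
  have hp₀le : p₀ ≤ p := Nat.le_of_dvd hp hp₀p
  -- the block scale T = k^μ
  have hexμ : ∃ μ, p₀ ≤ k ^ μ := ⟨p₀, le_of_lt (Nat.lt_pow_self (by omega : 1 < k))⟩
  set μ := Nat.find hexμ with hμdef
  set T := k ^ μ with hTdef
  have hTp : p₀ ≤ T := Nat.find_spec hexμ
  have hT0 : 0 < T := pow_pos hk0 _
  have hTk : T ≤ k * p₀ := by
    rcases Nat.eq_zero_or_pos μ with h | h
    · have : T = 1 := by rw [hTdef, h, pow_zero]
      have h2 : 1 ≤ k * p₀ := Nat.mul_pos hk0 h00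
      omega
    · have hlt : ¬ p₀ ≤ k ^ (μ - 1) := Nat.find_min hexμ (by omega)
      have he : T = k * k ^ (μ - 1) := by
        rw [hTdef, ← pow_succ']
        congr 1
        omega
      rw [he]
      exact Nat.mul_le_mul_left _ (by omega)
  -- the aligned window
  set m := M₀ + μ with hmdef
  have hkm : k ^ m = k ^ M₀ * T := by rw [hmdef, pow_add]
  have hkm0 : 0 < k ^ m := pow_pos hk0 _
  set n := i₀ / k ^ m + 1 with hndef
  have hn1 : 1 ≤ n := by rw [hndef]; exact Nat.le_add_left 1 _
  have hb2 := div_bounds i₀ (k ^ m) hkm0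
  have hnk1 : i₀ ≤ n * k ^ m := by rw [hndef]; exact hb2.1
  have hnk2 : n * k ^ m ≤ i₀ + k ^ m := by rw [hndef]; exact hb2.2
  clear_value m n
  set φb := n * k ^ m - i₀ with hφdef
  have hφk : φb ≤ k ^ m := by omega
  have hsum : n * k ^ m = i₀ + φb := by omega
  have h2km : 2 * k ^ m ≤ B * p := by
    have h1 : k ^ m ≤ k ^ M₀ * (k * p₀) := by
      rw [hkm]; exact Nat.mul_le_mul_left _ hTk
    have h2 : k ^ M₀ * (k * p₀) = k ^ (M₀ + 1) * p₀ := by rw [pow_succ]; ring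
    have h3 : k ^ (M₀ + 1) * p₀ ≤ k ^ (M₀ + 1) * p := Nat.mul_le_mul_left _ hp₀le
    have h4 : B * p = 2 * (k ^ (M₀ + 1) * p) := by rw [hBdef]; ring
    omega
  have hW : ∀ u, u < k ^ m → x (n * k ^ m + u) = Y (φb + u) := by
    intro u hu
    have he : n * k ^ m + u = i₀ + (φb + u) := by omega
    rw [he]
    exact hY _ (by omega)
  have hsn : ∀ (ℓ u : ℕ), u < k ^ ℓ → s (n * k ^ ℓ + u) = gstate hk0 δ (s n) ℓ u :=
    fun ℓ u hu => runSt_block hk δ q₀ ℓ n u hn1 hu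
  -- contents
  set out : Q → (Fin T → A) :=
    fun v => (fun tf : Fin T => τ (gstate hk0 δ v μ tf.val)) with houtdef
  set E : ℕ → (Fin T → A) :=
    fun j => (fun tf : Fin T => Y (φb + (j * T + tf.val))) with hEdef
  have hout : ∀ j, j < k ^ M₀ → out (gstate hk0 δ (s n) M₀ j) = E j := by
    intro j hj
    funext tf
    simp only [houtdef, hEdef]
    have htf : (tf : ℕ) < k ^ μ := tf.isLt
    have h1 : gstate hk0 δ (gstate hk0 δ (s n) M₀ j) μ tf.val
        = gstate hk0 δ (s n) m (j * T + tf.val) := by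
      rw [hmdef]
      exact (gstate_add hk0 δ (s n) M₀ μ j tf.val htf).symm
    have hbound : j * T + tf.val < k ^ m := by
      rw [hkm]
      calc j * T + tf.val < j * T + T := by omega
        _ = (j + 1) * T := by ring
        _ ≤ k ^ M₀ * T := Nat.mul_le_mul_right _ (by omega)
    rw [h1, ← hsn m _ hbound, ← hxs, hW _ hbound]
  -- pigeonhole to bound the phase-period D
  obtain ⟨a', b', hab', hb'N, heq'⟩ := exists_repeat (fun j => gstate hk0 δ (s n) M₀ j)
  have hNkM : N < k ^ M₀ := by
    calc N < 2 ^ N := Nat.lt_pow_self (by omega : 1 < 2)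
      _ ≤ 2 ^ M₀ := Nat.pow_le_pow_right (by omega) (by omega)
      _ ≤ k ^ M₀ := Nat.pow_le_pow_left (by omega) _
  have hb'k : b' < k ^ M₀ := by omega
  have hwin : ∀ t, t < T →
      Y ((φb + a' * T) + t) = Y ((φb + a' * T) + (b' - a') * T + t) := by
    intro t ht
    have h1 := congrFun (hout a' (by omega)) ⟨t, ht⟩
    have h2 := congrFun (hout b' hb'k) ⟨t, ht⟩
    rw [heq'] at h1
    have h3 : E a' ⟨t, ht⟩ = E b' ⟨t, ht⟩ := by rw [← h1, ← h2]
    simp only [hEdef] at h3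
    have h4 : (b' - a') * T + a' * T = b' * T := by
      rw [← Nat.add_mul, Nat.sub_add_cancel (le_of_lt hab')]
    calc Y ((φb + a' * T) + t) = Y (φb + (a' * T + t)) := by congr 1; omega
      _ = Y (φb + (b' * T + t)) := h3
      _ = Y ((φb + a' * T) + (b' - a') * T + t) := by congr 1; omega
  have hSper : ∀ t, Y (t + (b' - a') * T) = Y t :=
    period_of_window Y p₀ h00 hper₀ (φb + a' * T) T ((b' - a') * T) hTp hwin
  have hp₀S : p₀ ∣ (b' - a') * T :=
    hdvd _ (Nat.mul_pos (by omega) hT0) hSper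
  set g := Nat.gcd p₀ T with hgdef
  have hg0 : 0 < g := Nat.gcd_pos_of_pos_left _ h00
  set D := p₀ / g with hDdef
  have hD0 : 0 < D :=
    Nat.div_pos (Nat.le_of_dvd h00 (Nat.gcd_dvd_left _ _)) hg0
  have hDg : D * g = p₀ := Nat.div_mul_cancel (Nat.gcd_dvd_left p₀ T)
  have hTg : T / g * g = T := Nat.div_mul_cancel (Nat.gcd_dvd_right p₀ T)
  have hDΔ : D ∣ (b' - a') := by
    have hco : Nat.Coprime D (T / g) := Nat.coprime_div_gcd_div_gcd hg0
    apply hco.dvd_of_dvd_mul_right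
    have h3 : (b' - a') * (T / g) * g = (b' - a') * T := by
      rw [mul_assoc, hTg]
    have h4 : D * g ∣ (b' - a') * (T / g) * g := by
      rw [h3, hDg]; exact hp₀S
    exact (Nat.mul_dvd_mul_iff_right hg0).mp h4
  have hDN : D ≤ N := le_trans (Nat.le_of_dvd (by omega) hDΔ) (by omega)
  have hp₀DT : p₀ ∣ D * T := by
    refine ⟨T / g, ?_⟩
    calc D * T = D * (T / g * g) := by rw [hTg]
      _ = (D * g) * (T / g) := by ring
      _ = p₀ * (T / g) := by rw [hDg]
  have hDTper : ∀ t, Y (t + D * T) = Y t := per_of_dvd Y p₀ (D * T) hper₀ hp₀DT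
  have hE : ∀ a b, a % D = b % D → E a = E b := by
    have key : ∀ a b, a ≤ b → a % D = b % D → E a = E b := by
      intro a b hab habm
      funext tf
      simp only [hEdef]
      have hd : D ∣ (b - a) := (Nat.modEq_iff_dvd' hab).mp habm
      obtain ⟨e, he⟩ := hd
      have hb : b = a + D * e := by omega
      have hbT : b * T = a * T + e * (D * T) := by rw [hb]; ring
      have harith : φb + (b * T + tf.val) = (φb + (a * T + tf.val)) + e * (D * T) := by
        omega
      rw [harith, per_of_dvd Y (D * T) (e * (D * T)) hDTper (dvd_mul_left (D * T) e)]
    intro a b hab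
    rcases le_total a b with h | h
    · exact key a b h hab
    · exact (key b a h hab.symm).symm
  -- run the pumping argument
  have hstage := stage2 hk0 hk δ out D hD0 hDN E hE (s n) M₀ hM₀def.ge
    (fun t ht => hout t ht)
  -- conclude unbounded exponent
  intro n' hn'
  obtain ⟨w, ℓ, hLl, hfin⟩ := hstage (n' * p + p)
  set base := n * k ^ (w + ℓ + μ) with hbasedef
  have hwin2 : ∀ v, v < k ^ ℓ * T → x (base + v) = Y (φb + v) := by
    intro v hv
    have ht : v % T < T := Nat.mod_lt _ hT0
    have hv' : v < T * k ^ ℓ := by rw [mul_comm]; exact hv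
    have hdiv : v / T < k ^ ℓ := Nat.div_lt_of_lt_mul hv'
    have h1 := congrFun (hfin (v / T) hdiv) ⟨v % T, ht⟩
    simp only [houtdef, hEdef] at h1
    have hvd : v / T * T + v % T = v := by
      rw [mul_comm]; exact Nat.div_add_mod v T
    have h2 : gstate hk0 δ (gstate hk0 δ (s n) (w + ℓ) (v / T)) μ (v % T)
        = gstate hk0 δ (s n) ((w + ℓ) + μ) v := by
      rw [← gstate_add hk0 δ (s n) (w + ℓ) μ (v / T) (v % T) ht, hvd]
    have hvb : v < k ^ ((w + ℓ) + μ) := by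
      have : k ^ ℓ * T ≤ k ^ ((w + ℓ) + μ) := by
        rw [← pow_add]
        exact Nat.pow_le_pow_right (by omega) (by omega)
      omega
    have h3 : s (base + v) = gstate hk0 δ (s n) ((w + ℓ) + μ) v := by
      rw [hbasedef]
      exact hsn _ v hvb
    rw [hxs, h3, ← h2, h1]
    congr 1
    omega
  -- realign to phase 0
  set t₀ := (p - φb % p) % p with ht₀def
  have ht₀p : t₀ < p := Nat.mod_lt _ hp
  have hzero : (φb + t₀) % p = 0 := by
    have hr := Nat.mod_lt φb hp
    rcases Nat.eq_zero_or_pos (φb % p) with h | h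
    · have h1 : t₀ = 0 := by rw [ht₀def, h, Nat.sub_zero, Nat.mod_self]
      rw [h1, Nat.add_zero]; exact h
    · have h1 : t₀ = p - φb % p := by
        rw [ht₀def]; exact Nat.mod_eq_of_lt (by omega)
      rw [Nat.add_mod, h1]
      rw [Nat.mod_eq_of_lt (show p - φb % p < p by omega)]
      have h2 : φb % p + (p - φb % p) = p := by omega
      rw [h2, Nat.mod_self]
  have hYshift : ∀ v, Y ((φb + t₀) + v) = Y v := by
    intro v
    simp only [hYdef]
    congr 1
    rw [Nat.add_mod, hzero, Nat.zero_add, Nat.mod_mod_of_dvd v dvd_rfl]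
  have hkl : ℓ < k ^ ℓ := Nat.lt_pow_self (by omega : 1 < k)
  have hroom : t₀ + n' * p < k ^ ℓ * T := by
    have h1 : k ^ ℓ ≤ k ^ ℓ * T := Nat.le_mul_of_pos_right _ hT0
    omega
  refine ⟨base + t₀, ?_⟩
  rw [wpow_length]
  rw [wpow_eq_map y hp n']
  apply List.ext_getElem (by simp [factorAt_length])
  intro j h₁ h₂
  rw [List.getElem_map, List.getElem_range, factorAt_getElem]
  have hj : j < n' * p := by simpa using h₁
  have hv : t₀ + j < k ^ ℓ * T := by omega
  have h5 := hwin2 (t₀ + j) hv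
  have h6 : base + t₀ + j = base + (t₀ + j) := by omega
  rw [h6, h5]
  have h7 : φb + (t₀ + j) = (φb + t₀) + j := by omega
  rw [h7, hYshift j]
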